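/- arXiv:1911.12281 — 2 statements merged into one kernel-verified Lean document; each statement's English description precedes it below -/
import Mathlib

section
/- Let r ≥ 1 be an integer. There exists a Lie algebra homomorphism σ : t^R(r) → t^R(r) such that σ(t_{ij}) = t_{ij} for all 2 ≤ i, j ≤ r, σ(t_{1i}) = σ(t_{i1}) = − Σ_{k=1}^r t_{ki} for all 2 ≤ i ≤ r, and σ(t_{11}) = Σ_{k=1}^r Σ_{l=1}^r t_{kl}. (Equivalently, this assignment on the generators of the free Lie algebra maps the defining relation ideal of t^R(r) into itself.) -/
/-- The set of defining relations of the ribbon braid Drinfeld–Kohno Lie algebra `t^R(r)`: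
symmetry `t_{ij} - t_{ji}`, commutation `[t_{ij}, t_{kl}]` for `{i,j} ∩ {k,l} = ∅`, and
`[t_{ij}, t_{ki} + t_{kj}]`. -/
def tRRel (r : ℕ) : Set (FreeLieAlgebra ℚ (Fin r × Fin r)) :=
  { x | (∃ i j : Fin r, x = FreeLieAlgebra.of ℚ (i, j) - FreeLieAlgebra.of ℚ (j, i)) ∨
        (∃ i j k l : Fin r, ({i, j} : Set (Fin r)) ∩ {k, l} = ∅ ∧
          x = ⁅FreeLieAlgebra.of ℚ (i, j), FreeLieAlgebra.of ℚ (k, l)⁆) ∨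
        (∃ i j k : Fin r,
          x = ⁅FreeLieAlgebra.of ℚ (i, j),
                FreeLieAlgebra.of ℚ (k, i) + FreeLieAlgebra.of ℚ (k, j)⁆) }

/-- The Lie ideal generated by the defining relations. -/
noncomputable def tRIdeal (r : ℕ) : LieIdeal ℚ (FreeLieAlgebra ℚ (Fin r × Fin r)) :=
  LieSubmodule.lieSpan ℚ (FreeLieAlgebra ℚ (Fin r × Fin r)) (tRRel r)

/-- The ribbon braid Drinfeld–Kohno Lie algebra `t^R(r)`. -/
abbrev tR (r : ℕ) :=
  FreeLieAlgebra ℚ (Fin r × Fin r) ⧸ tRIdeal r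

/-- The generator `t_{ij}` of `t^R(r)`. -/
noncomputable def tGen (r : ℕ) (i j : Fin r) : tR r :=
  LieSubmodule.Quotient.mk (N := tRIdeal r) (FreeLieAlgebra.of ℚ (i, j))

section helpers

variable {L : Type*} [LieRing L]

lemma lie_sum' {ι : Type*} (s : Finset ι) (x : L) (f : ι → L) :
    ⁅x, ∑ i ∈ s, f i⁆ = ∑ i ∈ s, ⁅x, f i⁆ :=
  map_sum (AddMonoidHom.mk' (fun y => ⁅x, y⁆) (lie_add x)) f s

lemma sum_lie' {ι : Type*} (s : Finset ι) (x : L) (f : ι → L) :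
    ⁅∑ i ∈ s, f i, x⁆ = ∑ i ∈ s, ⁅f i, x⁆ :=
  map_sum (AddMonoidHom.mk' (fun y => ⁅y, x⁆) (fun a b => add_lie a b x)) f s

lemma add_self_zero {M : Type*} [AddCommGroup M] [Module ℚ M] {a : M} (h : a + a = 0) : a = 0 := by
  have h2 : (2 : ℚ) • a = 0 := by rw [two_smul]; exact h
  have h3 := congrArg (fun x => ((2 : ℚ)⁻¹) • x) h2
  simpa [smul_smul] using h3

end helpers

variable {r : ℕ}

lemma rel_zero {x : FreeLieAlgebra ℚ (Fin r × Fin r)} (hx : x ∈ tRRel r) :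
    LieSubmodule.Quotient.mk (N := tRIdeal r) x = 0 :=
  LieSubmodule.Quotient.mk_eq_zero'.mpr (LieSubmodule.subset_lieSpan hx)

lemma tGen_symm (i j : Fin r) : tGen r i j = tGen r j i := by
  have h : tGen r i j - tGen r j i = 0 := rel_zero (r := r) (Or.inl ⟨i, j, rfl⟩)
  exact sub_eq_zero.mp h

lemma tGen_comm {i j k l : Fin r} (hik : i ≠ k) (hil : i ≠ l) (hjk : j ≠ k) (hjl : j ≠ l) :
    ⁅tGen r i j, tGen r k l⁆ = 0 := by
  have hset : ({i, j} : Set (Fin r)) ∩ {k, l} = ∅ := by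
    ext x
    simp only [Set.mem_inter_iff, Set.mem_insert_iff, Set.mem_singleton_iff,
      Set.mem_empty_iff_false, iff_false, not_and]
    rintro (rfl | rfl) <;> rintro (rfl | rfl) <;> simp_all
  exact rel_zero (r := r) (Or.inr (Or.inl ⟨i, j, k, l, hset, rfl⟩))

lemma tGen_rel3 (i j k : Fin r) :
    ⁅tGen r i j, tGen r k i + tGen r k j⁆ = 0 :=
  rel_zero (r := r) (Or.inr (Or.inr ⟨i, j, k, rfl⟩))

lemma tGen_diag_comm (k m : Fin r) : ⁅tGen r k k, tGen r m k⁆ = 0 := by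
  have h := tGen_rel3 k k m
  rw [lie_add] at h
  exact add_self_zero h

/-- The column sum `S_j = ∑_k t_{kj}`. -/
noncomputable def colS (r : ℕ) (j : Fin r) : tR r := ∑ k : Fin r, tGen r k j

lemma lie_colS_of_ne {k l n : Fin r} (h1 : n ≠ k) (h2 : n ≠ l) :
    ⁅tGen r k l, colS r n⁆ = 0 := by
  rw [colS, lie_sum']
  rw [← Finset.sum_subset (Finset.subset_univ ({k, l} : Finset (Fin r)))
      (fun m _ hm => by
        simp only [Finset.mem_insert, Finset.mem_singleton, not_or] at hm
        exact tGen_comm (Ne.symm hm.1) h1.symm (Ne.symm hm.2) h2.symm)]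
  by_cases hkl : k = l
  · subst hkl
    rw [show ({k, k} : Finset (Fin r)) = {k} from
        Finset.insert_eq_self.mpr (Finset.mem_singleton_self k),
      Finset.sum_singleton, tGen_symm k n]
    exact tGen_diag_comm k n
  · rw [Finset.sum_pair hkl, ← lie_add, tGen_symm k n, tGen_symm l n, tGen_rel3]

lemma lie_colS_pair (k l : Fin r) : ⁅tGen r k l, colS r k + colS r l⁆ = 0 := by
  rw [colS, colS, ← Finset.sum_add_distrib, lie_sum']
  exact Finset.sum_eq_zero fun m _ => tGen_rel3 k l m

lemma lie_colS_self (k : Fin r) : ⁅tGen r k k, colS r k⁆ = 0 := by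
  have h := lie_colS_pair k k
  rw [lie_add] at h
  exact add_self_zero h

lemma lie_colS_colS (j k : Fin r) : ⁅colS r j, colS r k⁆ = ⁅colS r j, tGen r k j⁆ := by
  by_cases hjk : j = k
  · subst hjk
    rw [lie_self, colS, sum_lie']
    refine (Finset.sum_eq_zero fun m _ => ?_).symm
    rw [← lie_skew, tGen_diag_comm, neg_zero]
  · rw [show colS r k = ∑ m : Fin r, tGen r m k from rfl, lie_sum']
    rw [Finset.sum_eq_single_of_mem j (Finset.mem_univ j)
      (fun m _ hm => by
        rw [← lie_skew, lie_colS_of_ne (Ne.symm hm) hjk, neg_zero])]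
    rw [tGen_symm j k]

lemma lie_total (k l : Fin r) : ⁅tGen r k l, ∑ n : Fin r, colS r n⁆ = 0 := by
  rw [lie_sum']
  rw [← Finset.sum_subset (Finset.subset_univ ({k, l} : Finset (Fin r)))
      (fun n _ hn => by
        simp only [Finset.mem_insert, Finset.mem_singleton, not_or] at hn
        exact lie_colS_of_ne hn.1 hn.2)]
  by_cases hkl : k = l
  · subst hkl
    rw [show ({k, k} : Finset (Fin r)) = {k} from
        Finset.insert_eq_self.mpr (Finset.mem_singleton_self k),
      Finset.sum_singleton]
    exact lie_colS_self k
  · rw [Finset.sum_pair hkl, ← lie_add, lie_colS_pair]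

lemma colS_lie_total (k : Fin r) : ⁅colS r k, ∑ n : Fin r, colS r n⁆ = 0 := by
  rw [show colS r k = ∑ m : Fin r, tGen r m k from rfl, sum_lie']
  exact Finset.sum_eq_zero fun m _ => lie_total m k

lemma total_lie_gen (k l : Fin r) : ⁅∑ n : Fin r, colS r n, tGen r k l⁆ = 0 := by
  rw [← lie_skew, lie_total, neg_zero]

lemma total_lie (k : Fin r) : ⁅∑ n : Fin r, colS r n, colS r k⁆ = 0 := by
  rw [← lie_skew, colS_lie_total, neg_zero]

/-- The image of the generator `t_{ij}` under the cyclic structure map. -/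
noncomputable def gmap (r : ℕ) (z : Fin r) : Fin r × Fin r → tR r := fun p =>
  if p.1 = z then (if p.2 = z then ∑ n : Fin r, colS r n else -colS r p.2)
  else if p.2 = z then -colS r p.1 else tGen r p.1 p.2

lemma gmap_zz (z : Fin r) : gmap r z (z, z) = ∑ n : Fin r, colS r n := by
  simp [gmap]

lemma gmap_zr (z j : Fin r) (h : j ≠ z) : gmap r z (z, j) = -colS r j := by
  simp [gmap, h]

lemma gmap_rz (z i : Fin r) (h : i ≠ z) : gmap r z (i, z) = -colS r i := by
  simp [gmap, h]

lemma gmap_rr (z i j : Fin r) (hi : i ≠ z) (hj : j ≠ z) : gmap r z (i, j) = tGen r i j := by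
  simp [gmap, hi, hj]

lemma gmap_symm (z i j : Fin r) : gmap r z (i, j) = gmap r z (j, i) := by
  by_cases hi : i = z <;> by_cases hj : j = z <;>
    simp [gmap, hi, hj, tGen_symm i j]

lemma gmap_comm {z i j k l : Fin r} (hik : i ≠ k) (hil : i ≠ l) (hjk : j ≠ k) (hjl : j ≠ l) :
    ⁅gmap r z (i, j), gmap r z (k, l)⁆ = 0 := by
  by_cases hi : i = z
  · have hk : k ≠ z := fun h => hik (hi.trans h.symm)
    have hl : l ≠ z := fun h => hil (hi.trans h.symm)
    by_cases hj : j = z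
    · rw [hi, hj, gmap_zz, gmap_rr z k l hk hl]
      exact total_lie_gen k l
    · rw [hi, gmap_zr z j hj, gmap_rr z k l hk hl, neg_lie, ← lie_skew,
        lie_colS_of_ne hjk hjl, neg_zero, neg_zero]
  · by_cases hj : j = z
    · have hk : k ≠ z := fun h => hjk (hj.trans h.symm)
      have hl : l ≠ z := fun h => hjl (hj.trans h.symm)
      rw [hj, gmap_rz z i hi, gmap_rr z k l hk hl, neg_lie, ← lie_skew,
        lie_colS_of_ne hik hil, neg_zero, neg_zero]
    · by_cases hk : k = z <;> by_cases hl : l = z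
      · rw [hk, hl, gmap_rr z i j hi hj, gmap_zz]
        exact lie_total i j
      · rw [hk, gmap_rr z i j hi hj, gmap_zr z l hl, lie_neg,
          lie_colS_of_ne (Ne.symm hil) (Ne.symm hjl), neg_zero]
      · rw [hl, gmap_rr z i j hi hj, gmap_rz z k hk, lie_neg,
          lie_colS_of_ne (Ne.symm hik) (Ne.symm hjk), neg_zero]
      · rw [gmap_rr z i j hi hj, gmap_rr z k l hk hl]
        exact tGen_comm hik hil hjk hjl

lemma gmap_rel3 (z i j k : Fin r) :
    ⁅gmap r z (i, j), gmap r z (k, i) + gmap r z (k, j)⁆ = 0 := by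
  by_cases hi : i = z <;> by_cases hj : j = z <;> by_cases hk : k = z
  · -- i = j = k = z
    rw [hi, hj, hk, gmap_zz, lie_add, lie_self, add_zero]
  · -- i = j = z, k ≠ z
    rw [hi, hj, gmap_zz, gmap_rz z k hk, lie_add, lie_neg, total_lie, neg_zero, add_zero]
  · -- i = z, j ≠ z, k = z
    rw [hi, hk, gmap_zr z j hj, gmap_zz]
    simp [lie_add, colS_lie_total]
  · -- i = z, j ≠ z, k ≠ z
    rw [hi, gmap_zr z j hj, gmap_rz z k hk, gmap_rr z k j hk hj]
    simp [lie_add, lie_colS_colS]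
    rw [← lie_skew, neg_add_cancel]
  · -- i ≠ z, j = z, k = z
    rw [hj, hk, gmap_rz z i hi, gmap_zr z i hi, gmap_zz]
    simp [lie_add, colS_lie_total]
  · -- i ≠ z, j = z, k ≠ z
    rw [hj, gmap_rz z i hi, gmap_rr z k i hk hi, gmap_rz z k hk]
    simp [lie_add, lie_colS_colS]
    rw [← lie_skew, neg_add_cancel]
  · -- i ≠ z, j ≠ z, k = z
    rw [hk, gmap_rr z i j hi hj, gmap_zr z i hi, gmap_zr z j hj, ← neg_add,
      lie_neg, neg_eq_zero]
    exact lie_colS_pair i j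
  · rw [gmap_rr z i j hi hj, gmap_rr z k i hk hi, gmap_rr z k j hk hj]
    exact tGen_rel3 i j k

/-- There is a Lie algebra homomorphism `σ : t^R(r) → t^R(r)` with
`σ(t_{ij}) = t_{ij}` for `i, j ≥ 2`, `σ(t_{1i}) = σ(t_{i1}) = -Σ_k t_{ki}` for `i ≥ 2`,
and `σ(t_{11}) = Σ_k Σ_l t_{kl}`.  (The index `1` is represented by `⟨0, hr⟩ : Fin r`.) -/
theorem exists_cyclic_structure_map (r : ℕ) (hr : 1 ≤ r) :
    ∃ σ : tR r →ₗ⁅ℚ⁆ tR r,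
      (∀ i j : Fin r, i ≠ ⟨0, hr⟩ → j ≠ ⟨0, hr⟩ → σ (tGen r i j) = tGen r i j) ∧
      (∀ i : Fin r, i ≠ ⟨0, hr⟩ →
        σ (tGen r ⟨0, hr⟩ i) = -∑ k : Fin r, tGen r k i ∧
        σ (tGen r i ⟨0, hr⟩) = -∑ k : Fin r, tGen r k i) ∧
      σ (tGen r ⟨0, hr⟩ ⟨0, hr⟩) = ∑ k : Fin r, ∑ l : Fin r, tGen r k l := by
  set z : Fin r := ⟨0, hr⟩ with hz
  set φ : FreeLieAlgebra ℚ (Fin r × Fin r) →ₗ⁅ℚ⁆ tR r := FreeLieAlgebra.lift ℚ (gmap r z) with hφ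
  have hφ_of : ∀ p, φ (FreeLieAlgebra.of ℚ p) = gmap r z p := fun p =>
    FreeLieAlgebra.lift_of_apply (gmap r z) p
  have hrel : ∀ x ∈ tRRel r, φ x = 0 := by
    rintro x (⟨i, j, rfl⟩ | ⟨i, j, k, l, hset, rfl⟩ | ⟨i, j, k, rfl⟩)
    · rw [map_sub, hφ_of, hφ_of, gmap_symm, sub_self]
    · rw [LieHom.map_lie, hφ_of, hφ_of]
      have hmem : ∀ a : Fin r, a ∈ ({i, j} : Set (Fin r)) → a ∈ ({k, l} : Set (Fin r)) → False :=
        fun a h1 h2 => by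
          have hmem2 : a ∈ ({i, j} : Set (Fin r)) ∩ {k, l} := ⟨h1, h2⟩
          rw [hset] at hmem2; exact hmem2
      exact gmap_comm
        (fun h => hmem i (Or.inl rfl) (Or.inl h))
        (fun h => hmem i (Or.inl rfl) (Or.inr h))
        (fun h => hmem j (Or.inr rfl) (Or.inl h))
        (fun h => hmem j (Or.inr rfl) (Or.inr h))
    · rw [LieHom.map_lie, map_add, hφ_of, hφ_of, hφ_of]
      exact gmap_rel3 z i j k
  have hker' : (tRIdeal r : Submodule ℚ (FreeLieAlgebra ℚ (Fin r × Fin r))) ≤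
      LinearMap.ker (φ : FreeLieAlgebra ℚ (Fin r × Fin r) →ₗ[ℚ] tR r) := by
    have hker : tRIdeal r ≤ φ.ker :=
      LieSubmodule.lieSpan_le.mpr fun x hx => LieHom.mem_ker.mpr (hrel x hx)
    intro x hx
    exact LinearMap.mem_ker.mpr (LieHom.mem_ker.mp (hker hx))
  let σlin : tR r →ₗ[ℚ] tR r :=
    Submodule.liftQ (tRIdeal r : Submodule ℚ (FreeLieAlgebra ℚ (Fin r × Fin r)))
      (φ : FreeLieAlgebra ℚ (Fin r × Fin r) →ₗ[ℚ] tR r) hker'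
  have hσlin : ∀ x : FreeLieAlgebra ℚ (Fin r × Fin r),
      σlin (LieSubmodule.Quotient.mk (N := tRIdeal r) x) = φ x := fun x => rfl
  refine ⟨{ toLinearMap := σlin, map_lie' := ?_ }, ?_, ?_, ?_⟩
  · intro x y
    obtain ⟨a, rfl⟩ := LieSubmodule.Quotient.surjective_mk' (tRIdeal r) x
    obtain ⟨b, rfl⟩ := LieSubmodule.Quotient.surjective_mk' (tRIdeal r) y
    exact LieHom.map_lie φ a b
  · intro i j hi hj
    show σlin (tGen r i j) = tGen r i j
    rw [tGen, hσlin, hφ_of, gmap_rr z i j hi hj]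
    rfl
  · intro i hi
    constructor
    · show σlin (tGen r z i) = -∑ k : Fin r, tGen r k i
      rw [tGen, hσlin, hφ_of, gmap_zr z i hi, colS]
    · show σlin (tGen r i z) = -∑ k : Fin r, tGen r k i
      rw [tGen, hσlin, hφ_of, gmap_rz z i hi, colS]
  · show σlin (tGen r z z) = ∑ k : Fin r, ∑ l : Fin r, tGen r k l
    rw [tGen, hσlin, hφ_of, gmap_zz]
    simp only [colS]
    exact Finset.sum_comm
end

section
/- Fix r ≥ 1 and indices i ≠ j in {1, …, r}. In the exterior algebra ΛV, the induced algebra endomorphism ΛI satisfies ΛI(B_{ij}) = −B_{ij}, i.e. I(u_i)·I(ω_{ij}) + I(ω_{ij})·I(u_j) + I(u_j)·I(u_i) = −(u_i ω_{ij} + ω_{ij} u_j + u_j u_i). -/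
/-- Index type for the basis of `V`: vectors `u_i`, `ω_{ij}` (for `i < j`), and `θ_i`. -/
inductive BVIdx (r : ℕ) : Type
  | u : Fin r → BVIdx r
  | om : (i j : Fin r) → i < j → BVIdx r
  | th : Fin r → BVIdx r

/-- The ℚ-vector space `V` with basis `u_i`, `ω_{ij}` (`i < j`), `θ_i`. -/
abbrev BVSpace (r : ℕ) : Type := BVIdx r →₀ ℚ

/-- The basis vector `u_i`. -/
noncomputable def uVec (r : ℕ) (i : Fin r) : BVSpace r := Finsupp.single (BVIdx.u i) 1

/-- The vector `ω_{ij} = ω_{ji}` (defined for `i ≠ j`; set to `0` when `i = j`). -/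
noncomputable def omVec (r : ℕ) (i j : Fin r) : BVSpace r :=
  if h : i < j then Finsupp.single (BVIdx.om i j h) 1
  else if h' : j < i then Finsupp.single (BVIdx.om j i h') 1
  else 0

/-- The basis vector `θ_i`. -/
noncomputable def thVec (r : ℕ) (i : Fin r) : BVSpace r := Finsupp.single (BVIdx.th i) 1

/-- The linear involution `I : V → V`, with `I(u_i) = -u_i`,
`I(ω_{ij}) = ω_{ij} - u_i - u_j` and `I(θ_i) = θ_i - 2u_i`. -/
noncomputable def IMap (r : ℕ) : BVSpace r →ₗ[ℚ] BVSpace r :=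
  Finsupp.lift (BVSpace r) ℚ (BVIdx r) fun b =>
    match b with
    | .u i => -uVec r i
    | .om i j _ => omVec r i j - uVec r i - uVec r j
    | .th i => thVec r i - 2 • uVec r i

/-- The exterior algebra `ΛV`. -/
abbrev BVExt (r : ℕ) : Type := ExteriorAlgebra ℚ (BVSpace r)

/-- The element `u_i ∈ ΛV`. -/
noncomputable def uE (r : ℕ) (i : Fin r) : BVExt r := ExteriorAlgebra.ι ℚ (uVec r i)

/-- The element `ω_{ij} ∈ ΛV`. -/
noncomputable def omE (r : ℕ) (i j : Fin r) : BVExt r := ExteriorAlgebra.ι ℚ (omVec r i j)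

/-- The element `θ_i ∈ ΛV`. -/
noncomputable def thE (r : ℕ) (i : Fin r) : BVExt r := ExteriorAlgebra.ι ℚ (thVec r i)

/-- The induced algebra endomorphism `ΛI : ΛV → ΛV`. -/
noncomputable def extI (r : ℕ) : BVExt r →ₐ[ℚ] BVExt r := ExteriorAlgebra.map (IMap r)

/-- The Arnold element `A_{ijk} = ω_{ij}ω_{jk} + ω_{jk}ω_{ki} + ω_{ki}ω_{ij}`. -/
noncomputable def ArnoldA (r : ℕ) (i j k : Fin r) : BVExt r :=
  omE r i j * omE r j k + omE r j k * omE r k i + omE r k i * omE r i j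

/-- The element `B_{ij} = u_i ω_{ij} + ω_{ij} u_j + u_j u_i`. -/
noncomputable def RelB (r : ℕ) (i j : Fin r) : BVExt r :=
  uE r i * omE r i j + omE r i j * uE r j + uE r j * uE r i


lemma IMap_u (r : ℕ) (i : Fin r) : IMap r (uVec r i) = -uVec r i := by
  simp [IMap, uVec, Finsupp.lift_apply, Finsupp.sum_single_index]

lemma IMap_om (r : ℕ) (i j : Fin r) (hij : i ≠ j) :
    IMap r (omVec r i j) = omVec r i j - uVec r i - uVec r j := by
  rcases lt_or_gt_of_ne hij with h | h
  · rw [omVec, dif_pos h]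
    simp [IMap, Finsupp.lift_apply, Finsupp.sum_single_index, omVec, dif_pos h]
  · rw [omVec, dif_neg (not_lt_of_gt h), dif_pos h]
    have hs : omVec r j i = Finsupp.single (BVIdx.om j i h) 1 := by
      rw [omVec, dif_pos h]
    simp [IMap, Finsupp.lift_apply, Finsupp.sum_single_index, hs]
    try abel

/-- For `i ≠ j`, the induced algebra endomorphism `ΛI` satisfies `ΛI(B_{ij}) = -B_{ij}`. -/
theorem extI_RelB (r : ℕ) (hr : 1 ≤ r) (i j : Fin r) (hij : i ≠ j) :
    extI r (RelB r i j) = -RelB r i j := by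

  have hA : extI r (uE r i) = -uE r i := by
    rw [extI, uE, ExteriorAlgebra.map_apply_ι, IMap_u, map_neg]
  have hB : extI r (uE r j) = -uE r j := by
    rw [extI, uE, ExteriorAlgebra.map_apply_ι, IMap_u, map_neg]
  have hW : extI r (omE r i j) = omE r i j - uE r i - uE r j := by
    rw [extI, omE, ExteriorAlgebra.map_apply_ι, IMap_om r i j hij, map_sub, map_sub]
    rfl
  set A := uE r i
  set B := uE r j
  set W := omE r i j
  have hAA : A * A = 0 := ExteriorAlgebra.ι_sq_zero _
  have hBB : B * B = 0 := ExteriorAlgebra.ι_sq_zero _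
  have hBA : B * A = -(A * B) :=
    eq_neg_of_add_eq_zero_left (ExteriorAlgebra.ι_add_mul_swap (uVec r j) (uVec r i))
  rw [RelB, map_add, map_add, map_mul, map_mul, map_mul, hA, hB, hW]
  simp only [RelB, neg_mul, mul_neg, sub_mul, mul_sub, neg_neg, neg_sub, neg_add,
    hAA, hBB, hBA]
  rw [show uE r i = A from rfl, show omE r i j = W from rfl, show uE r j = B from rfl, hBA]
  abel
end
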